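/- Let d ≥ 1, ν ∈ (0, 1/d), α > 0, θ, ξ ∈ ℝ^d, and q ∈ Δ^d_ν. Let u_θ be the minimizer over z ∈ Δ^d_ν of θᵀ z + α·Σ_{i=1}^d z_i log(z_i/q_i), and let u_ξ be the minimizer over z ∈ Δ^d_ν of ξᵀ z + α·Σ_{i=1}^d z_i log(z_i/q_i). Then with δ := exp(2‖θ − ξ‖_∞ / α), for every i ∈ [d] one has (u_θ)_i / δ ≤ (u_ξ)_i ≤ δ·(u_θ)_i. -/

import Mathlib

-- increment bound: g(x+e) - g(x) ≤ e*(log(x+e)+1), g = x log x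
lemma gup {x e : ℝ} (hx : 0 < x) (he : 0 < e) :
    (x + e) * Real.log (x + e) - x * Real.log x ≤ e * (Real.log (x + e) + 1) := by
  have hxe : 0 < x + e := by linarith
  have h1 : Real.log ((x + e) / x) ≤ (x + e) / x - 1 :=
    Real.log_le_sub_one_of_pos (by positivity)
  have h2 : Real.log ((x + e) / x) = Real.log (x + e) - Real.log x :=
    Real.log_div (by positivity) (by positivity)
  have h3 : (x + e) / x - 1 = e / x := by field_simp; ring
  have h4 : Real.log (x + e) - Real.log x ≤ e / x := by rw [h2, h3] at h1; exact h1
  have h5 : x * (Real.log (x + e) - Real.log x) ≤ e := by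
    calc x * (Real.log (x + e) - Real.log x) ≤ x * (e / x) := by
          exact mul_le_mul_of_nonneg_left h4 hx.le
      _ = e := by field_simp
  nlinarith

-- decrement bound: g(x+e) - g(x) ≥ e*(log x + 1)
lemma glow {x e : ℝ} (hx : 0 < x) (he : 0 ≤ e) :
    e * (Real.log x + 1) ≤ (x + e) * Real.log (x + e) - x * Real.log x := by
  have hxe : 0 < x + e := by linarith
  have h1 : Real.log (x / (x + e)) ≤ x / (x + e) - 1 :=
    Real.log_le_sub_one_of_pos (by positivity)
  have h2 : Real.log (x / (x + e)) = Real.log x - Real.log (x + e) :=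
    Real.log_div (by positivity) (by positivity)
  have h3 : x / (x + e) - 1 = -e / (x + e) := by field_simp; ring
  have h4 : Real.log x - Real.log (x + e) ≤ -e / (x + e) := by rw [h2, h3] at h1; exact h1
  have h5 : e ≤ (x + e) * (Real.log (x + e) - Real.log x) := by
    have := mul_le_mul_of_nonneg_left h4 hxe.le
    have heq : (x + e) * (-e / (x + e)) = -e := by field_simp
    nlinarith
  nlinarith

lemma sum_update2 {d : ℕ} (G : Fin d → ℝ → ℝ) (z : Fin d → ℝ) {i j : Fin d}
    (hij : j ≠ i) (x y : ℝ) :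
    ∑ k, G k (Function.update (Function.update z i x) j y k)
      = ∑ k, G k (z k) + (G i x - G i (z i)) + (G j y - G j (z j)) := by
  have h : ∀ k, G k (Function.update (Function.update z i x) j y k)
      = G k (z k) + (if k = i then G i x - G i (z i) else 0)
        + (if k = j then G j y - G j (z j) else 0) := by
    intro k
    by_cases hk : k = j
    · subst hk
      rw [Function.update_self]
      simp [hij, Function.update_of_ne hij]
    · by_cases hk' : k = i
      · subst hk'
        rw [Function.update_of_ne hk, Function.update_self]
        simp [hk]
      · rw [Function.update_of_ne hk, Function.update_of_ne hk']
        simp [hk, hk']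
  simp only [h, Finset.sum_add_distrib, Finset.sum_ite_eq', Finset.mem_univ, if_true]

lemma key {d : ℕ} {ν α : ℝ} (hν : 0 < ν) (hα : 0 < α)
    (θ ξ q a b : Fin d → ℝ)
    (hq : ∀ i, ν ≤ q i)
    (ha1 : ∀ i, ν ≤ a i) (ha2 : ∑ i, a i = 1)
    (hb1 : ∀ i, ν ≤ b i) (hb2 : ∑ i, b i = 1)
    (hmina : ∀ z : Fin d → ℝ, ((∀ i, ν ≤ z i) ∧ ∑ i, z i = 1) →
      (∑ i, θ i * a i) + α * ∑ i, a i * Real.log (a i / q i)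
        ≤ (∑ i, θ i * z i) + α * ∑ i, z i * Real.log (z i / q i))
    (hminb : ∀ z : Fin d → ℝ, ((∀ i, ν ≤ z i) ∧ ∑ i, z i = 1) →
      (∑ i, ξ i * b i) + α * ∑ i, b i * Real.log (b i / q i)
        ≤ (∑ i, ξ i * z i) + α * ∑ i, z i * Real.log (z i / q i))
    (i : Fin d) : b i ≤ Real.exp (2 * ‖θ - ξ‖ / α) * a i := by
  by_contra hcon
  push_neg at hcon
  set N := ‖θ - ξ‖ with hN
  set δ := Real.exp (2 * N / α) with hδ
  have hN0 : 0 ≤ N := norm_nonneg _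
  have hδ1 : 1 ≤ δ := Real.one_le_exp (by positivity)
  have hai : ν ≤ a i := ha1 i
  have haipos : 0 < a i := lt_of_lt_of_le hν hai
  have hbi : δ * a i < b i := hcon
  have hbigt : a i < b i := lt_of_le_of_lt (le_mul_of_one_le_left haipos.le hδ1) hbi
  have hj : ∃ j, j ≠ i ∧ b j < a j := by
    by_contra hc
    push_neg at hc
    have hle : ∀ k ∈ Finset.univ, a k ≤ b k := by
      intro k _
      by_cases hk : k = i
      · subst hk; exact hbigt.le
      · exact hc k hk
    have : (∑ k, a k) < ∑ k, b k :=
      Finset.sum_lt_sum hle ⟨i, Finset.mem_univ i, hbigt⟩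
    rw [ha2, hb2] at this; exact lt_irrefl 1 this
  obtain ⟨j, hji, hjab⟩ := hj
  set ε := min ((a j - b j)/2) (min (b i - ν) ((b i - δ * a i)/(2*(δ+1)))) with hε
  have hδν : ν < b i := by nlinarith
  have hgap0 : 0 < b i - δ * a i := by linarith
  have hε0 : 0 < ε := by
    apply lt_min (by linarith)
    exact lt_min (by linarith) (by positivity)
  have hε1 : ε ≤ (a j - b j)/2 := min_le_left _ _
  have hε2 : ε ≤ b i - ν := le_trans (min_le_right _ _) (min_le_left _ _)
  have hε3 : ε ≤ (b i - δ * a i)/(2*(δ+1)) := le_trans (min_le_right _ _) (min_le_right _ _)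
  clear_value N δ ε
  have haj : ν ≤ a j := ha1 j
  have hbj : ν ≤ b j := hb1 j
  have hajε : ν ≤ a j - ε := by linarith
  have hbiε : ν ≤ b i - ε := by linarith
  have hbjaj : b j + ε ≤ a j - ε := by linarith
  have hqpos : ∀ k, 0 < q k := fun k => lt_of_lt_of_le hν (hq k)
  -- strict gap at i
  have h2δ : (0:ℝ) < 2 * (δ + 1) := by linarith
  have h4 : ε * (2 * (δ + 1)) ≤ b i - δ * a i := by
    have h := mul_le_mul_of_nonneg_right hε3 h2δ.le
    rwa [div_mul_cancel₀ _ (ne_of_gt h2δ)] at h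
  have hδε : ε ≤ δ * ε := by nlinarith
  have hgap : δ * (a i + ε) < b i - ε := by nlinarith
  -- perturbed points
  obtain ⟨a', ha'⟩ : ∃ w : Fin d → ℝ,
      w = Function.update (Function.update a i (a i + ε)) j (a j - ε) := ⟨_, rfl⟩
  obtain ⟨b', hb'⟩ : ∃ w : Fin d → ℝ,
      w = Function.update (Function.update b i (b i - ε)) j (b j + ε) := ⟨_, rfl⟩
  have suma : ∑ k, a' k = 1 := by
    have e := sum_update2 (fun _ t => t) a hji (a i + ε) (a j - ε)
    rw [ha', e, ha2]; ring
  have sumb : ∑ k, b' k = 1 := by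
    have e := sum_update2 (fun _ t => t) b hji (b i - ε) (b j + ε)
    rw [hb', e, hb2]; ring
  have ha'feas : (∀ k, ν ≤ a' k) ∧ ∑ k, a' k = 1 := by
    refine ⟨fun k => ?_, suma⟩
    by_cases hk : k = j
    · subst hk; rw [ha', Function.update_self]; exact hajε
    · rw [ha', Function.update_of_ne hk]
      by_cases hk' : k = i
      · subst hk'; rw [Function.update_self]; linarith
      · rw [Function.update_of_ne hk']; exact ha1 k
  have hb'feas : (∀ k, ν ≤ b' k) ∧ ∑ k, b' k = 1 := by
    refine ⟨fun k => ?_, sumb⟩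
    by_cases hk : k = j
    · subst hk; rw [hb', Function.update_self]; linarith
    · rw [hb', Function.update_of_ne hk]
      by_cases hk' : k = i
      · subst hk'; rw [Function.update_self]; exact hbiε
      · rw [Function.update_of_ne hk']; exact hb1 k
  have H1 := hmina a' ha'feas
  have H2 := hminb b' hb'feas
  -- expand sums
  have eθ : ∑ k, θ k * a' k = ∑ k, θ k * a k + (θ i * (a i + ε) - θ i * a i)
      + (θ j * (a j - ε) - θ j * a j) := by
    have e := sum_update2 (fun k t => θ k * t) a hji (a i + ε) (a j - ε)
    rw [ha', e]
  have eξ : ∑ k, ξ k * b' k = ∑ k, ξ k * b k + (ξ i * (b i - ε) - ξ i * b i)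
      + (ξ j * (b j + ε) - ξ j * b j) := by
    have e := sum_update2 (fun k t => ξ k * t) b hji (b i - ε) (b j + ε)
    rw [hb', e]
  have eEa : ∑ k, a' k * Real.log (a' k / q k) = ∑ k, a k * Real.log (a k / q k)
      + ((a i + ε) * Real.log ((a i + ε) / q i) - a i * Real.log (a i / q i))
      + ((a j - ε) * Real.log ((a j - ε) / q j) - a j * Real.log (a j / q j)) := by
    have e := sum_update2 (fun k t => t * Real.log (t / q k)) a hji (a i + ε) (a j - ε)
    rw [ha', e]
  have eEb : ∑ k, b' k * Real.log (b' k / q k) = ∑ k, b k * Real.log (b k / q k)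
      + ((b i - ε) * Real.log ((b i - ε) / q i) - b i * Real.log (b i / q i))
      + ((b j + ε) * Real.log ((b j + ε) / q j) - b j * Real.log (b j / q j)) := by
    have e := sum_update2 (fun k t => t * Real.log (t / q k)) b hji (b i - ε) (b j + ε)
    rw [hb', e]
  rw [eθ, eEa] at H1
  rw [eξ, eEb] at H2
  obtain ⟨X1, hX1⟩ : ∃ w : ℝ,
      w = (a i + ε) * Real.log ((a i + ε) / q i) - a i * Real.log (a i / q i) := ⟨_, rfl⟩
  obtain ⟨X2, hX2⟩ : ∃ w : ℝ,
      w = (a j - ε) * Real.log ((a j - ε) / q j) - a j * Real.log (a j / q j) := ⟨_, rfl⟩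
  obtain ⟨Y1, hY1⟩ : ∃ w : ℝ,
      w = (b i - ε) * Real.log ((b i - ε) / q i) - b i * Real.log (b i / q i) := ⟨_, rfl⟩
  obtain ⟨Y2, hY2⟩ : ∃ w : ℝ,
      w = (b j + ε) * Real.log ((b j + ε) / q j) - b j * Real.log (b j / q j) := ⟨_, rfl⟩
  have G1 : 0 ≤ θ i * ε - θ j * ε + α * X1 + α * X2 := by
    have expand : (∑ k, θ k * a k) + (θ i * (a i + ε) - θ i * a i)
        + (θ j * (a j - ε) - θ j * a j)
        + α * ((∑ k, a k * Real.log (a k / q k))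
          + ((a i + ε) * Real.log ((a i + ε) / q i) - a i * Real.log (a i / q i))
          + ((a j - ε) * Real.log ((a j - ε) / q j) - a j * Real.log (a j / q j)))
        = ((∑ k, θ k * a k) + α * ∑ k, a k * Real.log (a k / q k))
          + (θ i * ε - θ j * ε + α * X1 + α * X2) := by rw [hX1, hX2]; ring
    rw [expand] at H1
    linarith
  have G2 : 0 ≤ ξ j * ε - ξ i * ε + α * Y1 + α * Y2 := by
    have expand : (∑ k, ξ k * b k) + (ξ i * (b i - ε) - ξ i * b i)
        + (ξ j * (b j + ε) - ξ j * b j)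
        + α * ((∑ k, b k * Real.log (b k / q k))
          + ((b i - ε) * Real.log ((b i - ε) / q i) - b i * Real.log (b i / q i))
          + ((b j + ε) * Real.log ((b j + ε) / q j) - b j * Real.log (b j / q j)))
        = ((∑ k, ξ k * b k) + α * ∑ k, b k * Real.log (b k / q k))
          + (ξ j * ε - ξ i * ε + α * Y1 + α * Y2) := by rw [hY1, hY2]; ring
    rw [expand] at H2
    linarith
  clear H1 H2 eθ eξ eEa eEb hmina hminb ha' hb' suma sumb ha'feas hb'feas
  have logdiv : ∀ (t : ℝ) (k : Fin d), 0 < t → t * Real.log (t / q k)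
      = t * Real.log t - t * Real.log (q k) := by
    intro t k ht
    rw [Real.log_div (ne_of_gt ht) (ne_of_gt (hqpos k))]; ring
  -- bound the entropy increments
  have Dai : X1 ≤ ε * Real.log (a i + ε) + ε - ε * Real.log (q i) := by
    have e1 : (a i + ε) * Real.log ((a i + ε) / q i) - a i * Real.log (a i / q i)
        = ((a i + ε) * Real.log (a i + ε) - a i * Real.log (a i)) - ε * Real.log (q i) := by
      rw [logdiv _ _ (by linarith), logdiv _ _ haipos]; ring
    rw [hX1, e1]
    have h3 := gup haipos hε0
    have h4 : ε * (Real.log (a i + ε) + 1) = ε * Real.log (a i + ε) + ε := by ring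
    linarith
  have Dbi : Y1 ≤ -(ε * Real.log (b i - ε)) - ε + ε * Real.log (q i) := by
    have h1 : (0:ℝ) < b i - ε := by linarith
    have e1 : (b i - ε) * Real.log ((b i - ε) / q i) - b i * Real.log (b i / q i)
        = -(b i * Real.log (b i) - (b i - ε) * Real.log (b i - ε)) + ε * Real.log (q i) := by
      rw [logdiv _ _ h1, logdiv _ _ (by linarith : (0:ℝ) < b i)]; ring
    have h2 := glow h1 hε0.le
    have hbb : b i - ε + ε = b i := by ring
    rw [hbb] at h2
    have h4 : ε * (Real.log (b i - ε) + 1) = ε * Real.log (b i - ε) + ε := by ring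
    rw [hY1, e1]
    linarith
  have Daj : X2 ≤ -(ε * Real.log (a j - ε)) - ε + ε * Real.log (q j) := by
    have h1 : (0:ℝ) < a j - ε := by linarith
    have e1 : (a j - ε) * Real.log ((a j - ε) / q j) - a j * Real.log (a j / q j)
        = -(a j * Real.log (a j) - (a j - ε) * Real.log (a j - ε)) + ε * Real.log (q j) := by
      rw [logdiv _ _ h1, logdiv _ _ (by linarith : (0:ℝ) < a j)]; ring
    have h2 := glow h1 hε0.le
    have hbb : a j - ε + ε = a j := by ring
    rw [hbb] at h2
    have h4 : ε * (Real.log (a j - ε) + 1) = ε * Real.log (a j - ε) + ε := by ring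
    rw [hX2, e1]
    linarith
  have Dbj : Y2 ≤ ε * Real.log (b j + ε) + ε - ε * Real.log (q j) := by
    have h1 : (0:ℝ) < b j := by linarith
    have e1 : (b j + ε) * Real.log ((b j + ε) / q j) - b j * Real.log (b j / q j)
        = ((b j + ε) * Real.log (b j + ε) - b j * Real.log (b j)) - ε * Real.log (q j) := by
      rw [logdiv _ _ (by linarith), logdiv _ _ h1]; ring
    rw [hY2, e1]
    have h3 := gup h1 hε0
    have h4 : ε * (Real.log (b j + ε) + 1) = ε * Real.log (b j + ε) + ε := by ring
    linarith
  -- log comparisons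
  have hlogj : Real.log (b j + ε) ≤ Real.log (a j - ε) :=
    Real.log_le_log (by linarith) hbjaj
  have hlogi : Real.log (a i + ε) + 2 * N / α < Real.log (b i - ε) := by
    have h1 : Real.log (δ * (a i + ε)) < Real.log (b i - ε) :=
      Real.log_lt_log (by positivity) hgap
    rw [Real.log_mul (by positivity) (by positivity), hδ, Real.log_exp] at h1
    linarith
  -- norm bounds
  have hni : |θ i - ξ i| ≤ N := by
    rw [hN]
    have h := norm_le_pi_norm (θ - ξ) i
    simpa [Real.norm_eq_abs] using h
  have hnj : |θ j - ξ j| ≤ N := by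
    rw [hN]
    have h := norm_le_pi_norm (θ - ξ) j
    simpa [Real.norm_eq_abs] using h
  rw [abs_le] at hni hnj
  -- assemble
  have S1 : X1 + Y1 ≤ ε * Real.log (a i + ε) - ε * Real.log (b i - ε) := by linarith
  have S2 : X2 + Y2 ≤ ε * Real.log (b j + ε) - ε * Real.log (a j - ε) := by linarith
  have T2 : α * X2 + α * Y2 ≤ 0 := by
    have m := mul_le_mul_of_nonneg_left hlogj hε0.le
    have h1 : X2 + Y2 ≤ 0 := by linarith
    have h2 : α * (X2 + Y2) ≤ α * 0 := mul_le_mul_of_nonneg_left h1 hα.le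
    have e : α * (X2 + Y2) = α * X2 + α * Y2 := by ring
    linarith
  have T1 : α * X1 + α * Y1 < -(2 * N * ε) := by
    have h5 : ε * (Real.log (a i + ε) + 2 * N / α) < ε * Real.log (b i - ε) :=
      mul_lt_mul_of_pos_left hlogi hε0
    have e5 : ε * (Real.log (a i + ε) + 2 * N / α)
        = ε * Real.log (a i + ε) + ε * (2 * N / α) := by ring
    have h6 : X1 + Y1 < -(ε * (2 * N / α)) := by linarith
    have h7 : α * (X1 + Y1) < α * -(ε * (2 * N / α)) := mul_lt_mul_of_pos_left h6 hα
    have h8 : α * -(ε * (2 * N / α)) = -(2 * N * ε) := by field_simp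
    have e : α * (X1 + Y1) = α * X1 + α * Y1 := by ring
    linarith
  have T3 : θ i * ε - θ j * ε + ξ j * ε - ξ i * ε ≤ 2 * N * ε := by
    have m1 := mul_le_mul_of_nonneg_right hni.2 hε0.le
    have m2 := mul_le_mul_of_nonneg_right hnj.1 hε0.le
    have e1 : (θ i - ξ i) * ε = θ i * ε - ξ i * ε := by ring
    have e2 : (θ j - ξ j) * ε = θ j * ε - ξ j * ε := by ring
    have e3 : N * ε + N * ε = 2 * N * ε := by ring
    have e4 : -N * ε = -(N * ε) := by ring
    linarith
  linarith [G1, G2, T1, T2, T3]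


/-- If `u_θ` and `u_ξ` minimize `z ↦ θᵀz + α·KL(z‖q)` resp.
`z ↦ ξᵀz + α·KL(z‖q)` over the truncated simplex `Δ^d_ν`, then with
`δ := exp(2‖θ − ξ‖_∞/α)` one has `(u_θ)ᵢ/δ ≤ (u_ξ)ᵢ ≤ δ·(u_θ)ᵢ` for all `i`.
(The ℓ∞-norm is the sup norm `‖θ - ξ‖` of the function type `Fin d → ℝ`.) -/
theorem stmt10 {d : ℕ} (hd : 1 ≤ d) (ν : ℝ) (hν : 0 < ν) (hν' : ν < 1 / d)
    (α : ℝ) (hα : 0 < α) (θ ξ : Fin d → ℝ) (q : Fin d → ℝ)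
    (hq : (∀ i, ν ≤ q i) ∧ ∑ i, q i = 1)
    (uθ uξ : Fin d → ℝ)
    (huθ : (∀ i, ν ≤ uθ i) ∧ ∑ i, uθ i = 1)
    (huξ : (∀ i, ν ≤ uξ i) ∧ ∑ i, uξ i = 1)
    (hminθ : ∀ z : Fin d → ℝ, ((∀ i, ν ≤ z i) ∧ ∑ i, z i = 1) →
      (∑ i, θ i * uθ i) + α * ∑ i, uθ i * Real.log (uθ i / q i)
        ≤ (∑ i, θ i * z i) + α * ∑ i, z i * Real.log (z i / q i))
    (hminξ : ∀ z : Fin d → ℝ, ((∀ i, ν ≤ z i) ∧ ∑ i, z i = 1) →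
      (∑ i, ξ i * uξ i) + α * ∑ i, uξ i * Real.log (uξ i / q i)
        ≤ (∑ i, ξ i * z i) + α * ∑ i, z i * Real.log (z i / q i)) :
    ∀ i, uθ i / Real.exp (2 * ‖θ - ξ‖ / α) ≤ uξ i
      ∧ uξ i ≤ Real.exp (2 * ‖θ - ξ‖ / α) * uθ i := by
  intro i
  have hub := key hν hα θ ξ q uθ uξ hq.1 huθ.1 huθ.2 huξ.1 huξ.2 hminθ hminξ i
  have hlb := key hν hα ξ θ q uξ uθ hq.1 huξ.1 huξ.2 huθ.1 huθ.2 hminξ hminθ i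
  rw [norm_sub_rev] at hlb
  constructor
  · rw [div_le_iff₀ (Real.exp_pos _)]
    linarith [hlb]
  · exact hub
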